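/- Let p ∈ ℕ, h > 0, Δ > 0, coefficients α_l ∈ ℂ for l = −p,…,p, and let v(y) = Σ_{l=−p}^{p} α_l exp(i h l y) be a trigonometric polynomial. Let μ, σ : ℝ → ℝ be functions with σ bounded, let ξ be a standard Gaussian random variable, and define a_k(x) = (1/√(k!)) E[v(x + μ(x)Δ + σ(x)√Δ·ξ) H_k(ξ)] for k ≥ 1. Then for every k ≥ 1 and every x ∈ ℝ, |a_k(x)| ≤ (h^k Δ^{k/2}/√(k!)) Σ_{l=−p}^{p} |α_l| |l|^k |σ(x)|^k exp(−h²l²σ(x)²Δ/2); consequently, for every β > 0 the sum Σ_{k≥1} k^β sup_{x∈ℝ} |a_k(x)|² is finite. -/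

import Mathlib

open MeasureTheory ProbabilityTheory Polynomial Complex Real Filter
open scoped NNReal ENNReal

noncomputable section

namespace TrigHermiteAux

/-- cast of aeval over ℤ-polynomials from ℝ to ℂ -/
lemma aeval_ofReal (P : Polynomial ℤ) (y : ℝ) :
    (Polynomial.aeval (y : ℂ) P) = ((Polynomial.aeval y P : ℝ) : ℂ) := by
  have := Polynomial.aeval_algHom_apply (Complex.ofRealAm.restrictScalars ℤ) y P
  simpa using this

/-- real integrability of polynomial × gaussian -/
lemma integrable_poly_gauss (P : Polynomial ℤ) :
    Integrable (fun y : ℝ => (Polynomial.aeval y P : ℝ) * Real.exp (-(y ^ 2 / 2))) := by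
  have hq : ∀ y : ℝ, (Polynomial.aeval y P : ℝ) =
      ∑ i ∈ Finset.range ((P.map (algebraMap ℤ ℝ)).natDegree + 1),
        (P.map (algebraMap ℤ ℝ)).coeff i * y ^ i := by
    intro y
    rw [Polynomial.aeval_def, ← Polynomial.eval_map, Polynomial.eval_eq_sum_range]
  simp_rw [hq, Finset.sum_mul]
  apply integrable_finset_sum
  intro i _
  simp_rw [mul_assoc]
  apply Integrable.const_mul
  have := integrable_rpow_mul_exp_neg_mul_sq (b := 1/2) (by norm_num) (s := (i : ℝ))
    (lt_of_lt_of_le neg_one_lt_zero (Nat.cast_nonneg i))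
  refine this.congr ?_
  filter_upwards with y
  rw [Real.rpow_natCast]
  ring_nf


/-- the complex integrand -/
def G (c : ℝ) (P : Polynomial ℤ) (y : ℝ) : ℂ :=
  Complex.exp (Complex.I * c * y) *
    (Polynomial.aeval (y : ℂ) P * (Real.exp (-(y ^ 2 / 2)) : ℂ))

lemma norm_cexp_Icy (c y : ℝ) : ‖Complex.exp (Complex.I * c * y)‖ = 1 := by
  rw [Complex.norm_exp]
  simp [Complex.mul_re]

lemma integrable_G (c : ℝ) (P : Polynomial ℤ) : Integrable (G c P) := by
  have h1 : Integrable (fun y : ℝ =>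
      (((Polynomial.aeval y P : ℝ) * Real.exp (-(y ^ 2 / 2)) : ℝ) : ℂ)) :=
    (integrable_poly_gauss P).ofReal
  have := h1.bdd_mul (f := fun y : ℝ => Complex.exp (Complex.I * c * y))
    (Complex.continuous_exp.comp (by continuity)).aestronglyMeasurable
    (Filter.Eventually.of_forall fun y => le_of_eq (norm_cexp_Icy c y))
  refine this.congr (Filter.Eventually.of_forall fun y => ?_)
  unfold G
  rw [aeval_ofReal]
  push_cast
  ring

lemma norm_G (c : ℝ) (P : Polynomial ℤ) (y : ℝ) :
    ‖G c P y‖ = |(Polynomial.aeval y P : ℝ)| * Real.exp (-(y ^ 2 / 2)) := by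
  unfold G
  rw [norm_mul, norm_cexp_Icy, one_mul, norm_mul, aeval_ofReal, Complex.norm_real,
    Complex.norm_real, Real.norm_eq_abs, Real.norm_eq_abs, Real.abs_exp]

lemma tendsto_G_cocompact (c : ℝ) (P : Polynomial ℤ) :
    Filter.Tendsto (G c P) (Filter.cocompact ℝ) (nhds 0) := by
  rw [tendsto_zero_iff_norm_tendsto_zero]
  simp_rw [norm_G]
  set q := P.map (algebraMap ℤ ℝ) with hq
  have hev : ∀ y : ℝ, |(Polynomial.aeval y P : ℝ)| * Real.exp (-(y ^ 2 / 2)) ≤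
      ∑ i ∈ Finset.range (q.natDegree + 1),
        |q.coeff i| * (|y| ^ (i : ℝ) * Real.exp (-(1/2) * y ^ 2)) := by
    intro y
    have : (Polynomial.aeval y P : ℝ) = ∑ i ∈ Finset.range (q.natDegree + 1),
        q.coeff i * y ^ i := by
      rw [Polynomial.aeval_def, ← Polynomial.eval_map, ← hq, Polynomial.eval_eq_sum_range]
    rw [this]
    have hexp : Real.exp (-(y ^ 2 / 2)) = Real.exp (-(1/2) * y ^ 2) := by ring_nf
    rw [hexp]
    have habs : |∑ i ∈ Finset.range (q.natDegree + 1), q.coeff i * y ^ i| ≤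
        ∑ i ∈ Finset.range (q.natDegree + 1), |q.coeff i| * |y| ^ (i : ℝ) := by
      refine (Finset.abs_sum_le_sum_abs _ _).trans (Finset.sum_le_sum fun i _ => ?_)
      rw [abs_mul, Real.rpow_natCast, _root_.abs_pow]
    calc |∑ i ∈ Finset.range (q.natDegree + 1), q.coeff i * y ^ i|
          * Real.exp (-(1/2) * y ^ 2)
        ≤ (∑ i ∈ Finset.range (q.natDegree + 1), |q.coeff i| * |y| ^ (i : ℝ))
          * Real.exp (-(1/2) * y ^ 2) := by
          exact mul_le_mul_of_nonneg_right habs (Real.exp_nonneg _)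
      _ = _ := by rw [Finset.sum_mul]; exact Finset.sum_congr rfl fun i _ => by ring
  have hsum : Filter.Tendsto (fun y : ℝ => ∑ i ∈ Finset.range (q.natDegree + 1),
      |q.coeff i| * (|y| ^ (i : ℝ) * Real.exp (-(1/2) * y ^ 2)))
      (Filter.cocompact ℝ) (nhds 0) := by
    have : (0 : ℝ) = ∑ i ∈ Finset.range (q.natDegree + 1), |q.coeff i| * 0 := by simp
    rw [this]
    refine tendsto_finset_sum _ fun i _ => Filter.Tendsto.const_mul _ ?_
    exact tendsto_rpow_abs_mul_exp_neg_mul_sq_cocompact (by norm_num) _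
  refine squeeze_zero (fun y => by positivity) hev hsum


lemma hasDerivAt_G (c : ℝ) (k : ℕ) (y : ℝ) :
    HasDerivAt (G c (Polynomial.hermite k))
      (Complex.I * c * G c (Polynomial.hermite k) y - G c (Polynomial.hermite (k+1)) y) y := by
  have h1 : HasDerivAt (fun y : ℝ => Complex.exp (Complex.I * c * y))
      (Complex.I * c * Complex.exp (Complex.I * c * y)) y := by
    have hl : HasDerivAt (fun y : ℝ => Complex.I * c * (y : ℂ)) (Complex.I * c) y := by
      simpa using (Complex.ofRealCLM.hasDerivAt (x := y)).const_mul (Complex.I * c)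
    simpa [mul_comm] using hl.cexp
  have h2 : HasDerivAt (fun y : ℝ => Polynomial.aeval (y : ℂ) (Polynomial.hermite k))
      (Polynomial.aeval (y : ℂ) (Polynomial.derivative (Polynomial.hermite k))) y :=
    (Polynomial.hasDerivAt_aeval (q := Polynomial.hermite k) ((y : ℂ))).comp_ofReal
  have h3r : HasDerivAt (fun y : ℝ => Real.exp (-(y ^ 2 / 2)))
      (-y * Real.exp (-(y ^ 2 / 2))) y := by
    have : HasDerivAt (fun y : ℝ => -(y ^ 2 / 2)) (-y) y := by
      simpa using (((hasDerivAt_id y).pow 2).div_const 2).fun_neg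
    simpa [mul_comm] using this.exp
  have h3 : HasDerivAt (fun y : ℝ => ((Real.exp (-(y ^ 2 / 2)) : ℝ) : ℂ))
      ((-y * Real.exp (-(y ^ 2 / 2)) : ℝ) : ℂ) y := h3r.ofReal_comp
  have h23 := h2.mul h3
  have h := h1.mul h23
  refine h.congr_deriv ?_
  unfold G
  have hsucc : (Polynomial.aeval (y : ℂ) (Polynomial.hermite (k+1))) =
      (y : ℂ) * Polynomial.aeval (y : ℂ) (Polynomial.hermite k) -
        Polynomial.aeval (y : ℂ) (Polynomial.derivative (Polynomial.hermite k)) := by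
    rw [Polynomial.hermite_succ]
    simp
  rw [hsucc]
  simp only [Pi.mul_apply]
  push_cast
  ring

lemma integral_G_hermite (c : ℝ) (k : ℕ) :
    ∫ y : ℝ, G c (Polynomial.hermite k) y =
      (Complex.I * c) ^ k * (Real.sqrt (2 * Real.pi) : ℂ) *
        Complex.exp (-(c : ℂ) ^ 2 / 2) := by
  induction k with
  | zero =>
    have h0 : ∀ y : ℝ, G c (Polynomial.hermite 0) y =
        Complex.exp (Complex.I * c * y) * Complex.exp (-(1/2 : ℂ) * (y : ℂ) ^ 2) := by
      intro y
      unfold G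
      rw [Polynomial.hermite_zero]
      simp only [map_one, one_mul]
      rw [Complex.ofReal_exp]
      push_cast
      ring_nf
    simp_rw [h0]
    rw [fourierIntegral_gaussian (by norm_num) (c : ℂ)]
    have hpow : ((Real.pi : ℂ) / (1/2)) ^ (1/2 : ℂ) = (Real.sqrt (2 * Real.pi) : ℂ) := by
      have h2π : (0 : ℝ) ≤ 2 * Real.pi := by positivity
      have h1 := Complex.ofReal_cpow h2π (1/2 : ℝ)
      rw [← Real.sqrt_eq_rpow] at h1
      have h2 : ((Real.pi : ℂ) / (1/2)) = ((2 * Real.pi : ℝ) : ℂ) := by push_cast; ring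
      have h3 : (((1:ℝ)/2 : ℝ) : ℂ) = (1/2 : ℂ) := by norm_num
      rw [h2, ← h3, ← h1]
    rw [hpow]
    have : -(c : ℂ) ^ 2 / (4 * (1/2)) = -(c : ℂ) ^ 2 / 2 := by ring
    rw [this]
    simp
  | succ k ih =>
    have hder := hasDerivAt_G c k
    have hint : Integrable (fun y : ℝ =>
        Complex.I * c * G c (Polynomial.hermite k) y - G c (Polynomial.hermite (k+1)) y) :=
      ((integrable_G c (Polynomial.hermite k)).const_mul _).sub
        (integrable_G c (Polynomial.hermite (k+1)))
    have htop : Filter.Tendsto (G c (Polynomial.hermite k)) Filter.atTop (nhds 0) :=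
      (tendsto_G_cocompact c _).mono_left _root_.atTop_le_cocompact
    have hbot : Filter.Tendsto (G c (Polynomial.hermite k)) Filter.atBot (nhds 0) :=
      (tendsto_G_cocompact c _).mono_left _root_.atBot_le_cocompact
    have hIic := integral_Iic_of_hasDerivAt_of_tendsto' (a := 0)
      (fun y _ => hder y) hint.integrableOn hbot
    have hIoi := integral_Ioi_of_hasDerivAt_of_tendsto' (a := 0)
      (fun y _ => hder y) hint.integrableOn htop
    have htot := intervalIntegral.integral_Iic_add_Ioi (b := 0) hint.integrableOn hint.integrableOn
    rw [hIic, hIoi] at htot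
    have hzero : ∫ y : ℝ, (Complex.I * c * G c (Polynomial.hermite k) y -
        G c (Polynomial.hermite (k+1)) y) = 0 := by
      rw [← htot]; ring
    rw [integral_sub ((integrable_G c (Polynomial.hermite k)).const_mul _)
        (integrable_G c (Polynomial.hermite (k+1))), integral_const_mul, ih,
        sub_eq_zero] at hzero
    rw [← hzero]
    ring


lemma integral_gaussianReal_eq (g : ℝ → ℂ) :
    ∫ y, g y ∂(gaussianReal 0 1) = ∫ y : ℝ, gaussianPDFReal 0 1 y • g y := by
  rw [gaussianReal_of_var_ne_zero 0 one_ne_zero]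
  have hmeas : Measurable (fun x => Real.toNNReal (gaussianPDFReal 0 1 x)) :=
    (measurable_gaussianPDFReal 0 1).real_toNNReal
  have heq : gaussianPDF 0 1 =
      fun x => ((Real.toNNReal (gaussianPDFReal 0 1 x) : ℝ≥0) : ℝ≥0∞) := rfl
  rw [heq, integral_withDensity_eq_integral_smul hmeas]
  congr 1; funext y
  rw [NNReal.smul_def, Real.coe_toNNReal _ (gaussianPDFReal_nonneg 0 1 y)]

lemma pdf01 (y : ℝ) :
    gaussianPDFReal 0 1 y = (Real.sqrt (2 * Real.pi))⁻¹ * Real.exp (-(y ^ 2 / 2)) := by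
  unfold gaussianPDFReal
  simp only [NNReal.coe_one, mul_one, sub_zero]
  rw [neg_div]

end TrigHermiteAux

open TrigHermiteAux



open MeasureTheory ProbabilityTheory

/-- Example 2: for a trigonometric polynomial v(y) = Σ_{l=-p}^{p} α_l e^{ihly} and bounded σ,
the Hermite chaos coefficients a_k(x) = (1/√k!) E[v(x + μ(x)Δ + σ(x)√Δ ξ) H_k(ξ)] satisfy
|a_k(x)| ≤ (h^k Δ^{k/2}/√k!) Σ_l |α_l| |l|^k |σ(x)|^k e^{-h²l²σ(x)²Δ/2}, and consequently
Σ_{k≥1} k^β sup_x |a_k(x)|² < ∞ for every β > 0. -/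
theorem trig_polynomial_hermite_coeff_decay (p : ℕ) (h Δ : ℝ) (hh : 0 < h) (hΔ : 0 < Δ)
    (α : ℤ → ℂ) (μ σ : ℝ → ℝ) (Cσ : ℝ) (hσ : ∀ x, |σ x| ≤ Cσ)
    (v : ℝ → ℂ)
    (hv : ∀ y : ℝ, v y =
      ∑ l ∈ Finset.Icc (-(p : ℤ)) (p : ℤ), α l * Complex.exp (Complex.I * h * l * y))
    (a : ℕ → ℝ → ℂ)
    (ha : ∀ k : ℕ, ∀ x : ℝ, a k x =
      (1 / Real.sqrt (Nat.factorial k) : ℝ) •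
        ∫ y : ℝ, v (x + μ x * Δ + σ x * Real.sqrt Δ * y) *
          (Polynomial.aeval (y : ℂ) (Polynomial.hermite k)) ∂(gaussianReal 0 1)) :
    (∀ k : ℕ, 1 ≤ k → ∀ x : ℝ,
      ‖a k x‖ ≤ (h ^ k * Real.sqrt Δ ^ k / Real.sqrt (Nat.factorial k)) *
        ∑ l ∈ Finset.Icc (-(p : ℤ)) (p : ℤ),
          ‖α l‖ * |(l : ℝ)| ^ k * |σ x| ^ k *
            Real.exp (-(h ^ 2 * (l : ℝ) ^ 2 * (σ x) ^ 2 * Δ) / 2)) ∧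
    (∀ β : ℝ, 0 < β →
      Summable (fun k : ℕ => (k : ℝ) ^ β * ⨆ x : ℝ, ‖a k x‖ ^ 2)) := by
  classical
  have hbound : ∀ (k : ℕ) (x : ℝ),
      ‖a k x‖ ≤ (h ^ k * Real.sqrt Δ ^ k / Real.sqrt (Nat.factorial k)) *
        ∑ l ∈ Finset.Icc (-(p : ℤ)) (p : ℤ),
          ‖α l‖ * |(l : ℝ)| ^ k * |σ x| ^ k *
            Real.exp (-(h ^ 2 * (l : ℝ) ^ 2 * (σ x) ^ 2 * Δ) / 2) := by
    intro k x
    set s : ℝ := x + μ x * Δ with hs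
    set w : ℝ := σ x * Real.sqrt Δ with hw
    set c : ℤ → ℝ := fun l => h * l * w with hc
    have hrw : a k x = (1 / Real.sqrt (Nat.factorial k) : ℝ) •
        ∑ l ∈ Finset.Icc (-(p : ℤ)) (p : ℤ),
          α l * Complex.exp (Complex.I * h * l * (s : ℂ)) *
            ((Complex.I * (c l : ℂ)) ^ k * Complex.exp (-(c l : ℂ) ^ 2 / 2)) := by
      rw [ha k x, integral_gaussianReal_eq]
      congr 1
      have hfun : (fun y : ℝ => gaussianPDFReal 0 1 y •
          (v (x + μ x * Δ + σ x * Real.sqrt Δ * y) *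
            (Polynomial.aeval (y : ℂ) (Polynomial.hermite k)))) =
          fun y : ℝ => ∑ l ∈ Finset.Icc (-(p : ℤ)) (p : ℤ),
            (α l * Complex.exp (Complex.I * h * l * (s : ℂ)) *
              (((Real.sqrt (2 * Real.pi))⁻¹ : ℝ) : ℂ)) *
                G (c l) (Polynomial.hermite k) y := by
        funext y
        rw [hv, pdf01, Finset.sum_mul, Finset.smul_sum]
        refine Finset.sum_congr rfl fun l _ => ?_
        have hexp : Complex.I * h * l * ((x + μ x * Δ + σ x * Real.sqrt Δ * y : ℝ) : ℂ) =
            Complex.I * h * l * (s : ℂ) + Complex.I * (c l : ℂ) * (y : ℂ) := by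
          rw [hs, hc, hw]; push_cast; ring
        rw [hexp, Complex.exp_add]
        unfold G
        rw [Complex.real_smul]
        push_cast
        ring
      rw [hfun, MeasureTheory.integral_finset_sum _
        (fun l _ => (integrable_G (c l) (Polynomial.hermite k)).const_mul _)]
      refine Finset.sum_congr rfl fun l _ => ?_
      rw [MeasureTheory.integral_const_mul, integral_G_hermite]
      have hne : ((Real.sqrt (2 * Real.pi) : ℝ) : ℂ) ≠ 0 := by
        simp only [ne_eq, Complex.ofReal_eq_zero]
        exact ne_of_gt (Real.sqrt_pos.2 (by positivity))
      rw [Complex.ofReal_inv]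
      rw [show α l * Complex.exp (Complex.I * h * l * (s : ℂ)) *
            ((Real.sqrt (2 * Real.pi) : ℝ) : ℂ)⁻¹ *
            ((Complex.I * (c l : ℂ)) ^ k * ((Real.sqrt (2 * Real.pi) : ℝ) : ℂ) *
              Complex.exp (-(c l : ℂ) ^ 2 / 2)) =
          α l * Complex.exp (Complex.I * h * l * (s : ℂ)) *
            ((Complex.I * (c l : ℂ)) ^ k * Complex.exp (-(c l : ℂ) ^ 2 / 2)) *
            (((Real.sqrt (2 * Real.pi) : ℝ) : ℂ)⁻¹ * ((Real.sqrt (2 * Real.pi) : ℝ) : ℂ))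
          from by ring, inv_mul_cancel₀ hne, mul_one]
    have hterm : ∀ l : ℤ, ‖α l * Complex.exp (Complex.I * h * l * (s : ℂ)) *
        ((Complex.I * (c l : ℂ)) ^ k * Complex.exp (-(c l : ℂ) ^ 2 / 2))‖ =
        ‖α l‖ * (|c l| ^ k * Real.exp (-((c l) ^ 2) / 2)) := by
      intro l
      have e1 : ‖Complex.exp (Complex.I * h * l * (s : ℂ))‖ = 1 := by
        rw [Complex.norm_exp]
        simp [Complex.mul_re, Complex.mul_im]
      have e2 : ‖(Complex.I * (c l : ℂ)) ^ k‖ = |c l| ^ k := by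
        rw [norm_pow, norm_mul, Complex.norm_I, one_mul,
          Complex.norm_real, Real.norm_eq_abs]
      have e3 : ‖Complex.exp (-(c l : ℂ) ^ 2 / 2)‖ = Real.exp (-((c l) ^ 2) / 2) := by
        have harg : -(c l : ℂ) ^ 2 / 2 = ((-((c l) ^ 2) / 2 : ℝ) : ℂ) := by push_cast; ring
        rw [harg, Complex.norm_exp, Complex.ofReal_re]
      rw [norm_mul, norm_mul, norm_mul, e1, e2, e3, mul_one]
    rw [hrw, norm_smul, Real.norm_eq_abs,
      _root_.abs_of_nonneg (by positivity : (0:ℝ) ≤ 1 / Real.sqrt (Nat.factorial k))]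
    calc (1 / Real.sqrt (Nat.factorial k)) * ‖∑ l ∈ Finset.Icc (-(p : ℤ)) (p : ℤ),
          α l * Complex.exp (Complex.I * h * l * (s : ℂ)) *
            ((Complex.I * (c l : ℂ)) ^ k * Complex.exp (-(c l : ℂ) ^ 2 / 2))‖
        ≤ (1 / Real.sqrt (Nat.factorial k)) * ∑ l ∈ Finset.Icc (-(p : ℤ)) (p : ℤ),
          ‖α l * Complex.exp (Complex.I * h * l * (s : ℂ)) *
            ((Complex.I * (c l : ℂ)) ^ k * Complex.exp (-(c l : ℂ) ^ 2 / 2))‖ := by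
          exact mul_le_mul_of_nonneg_left (norm_sum_le _ _) (by positivity)
      _ = (h ^ k * Real.sqrt Δ ^ k / Real.sqrt (Nat.factorial k)) *
          ∑ l ∈ Finset.Icc (-(p : ℤ)) (p : ℤ),
            ‖α l‖ * |(l : ℝ)| ^ k * |σ x| ^ k *
              Real.exp (-(h ^ 2 * (l : ℝ) ^ 2 * (σ x) ^ 2 * Δ) / 2) := by
          rw [Finset.mul_sum, Finset.mul_sum]
          refine Finset.sum_congr rfl fun l _ => ?_
          rw [hterm l]
          have habs : |c l| = h * |(l : ℝ)| * (|σ x| * Real.sqrt Δ) := by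
            rw [hc, hw]
            rw [abs_mul, abs_mul, abs_mul, abs_of_pos hh,
              _root_.abs_of_nonneg (Real.sqrt_nonneg Δ)]
          have hsq : (c l) ^ 2 = h ^ 2 * (l : ℝ) ^ 2 * (σ x) ^ 2 * Δ := by
            rw [hc, hw]
            rw [show (h * (l:ℝ) * (σ x * Real.sqrt Δ)) ^ 2
                = (h * (l:ℝ) * σ x) ^ 2 * Real.sqrt Δ ^ 2 from by ring,
              Real.sq_sqrt hΔ.le]
            ring
          rw [habs, hsq, mul_pow, mul_pow, mul_pow]
          ring
  refine ⟨fun k _ x => hbound k x, ?_⟩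
  intro β hβ
  set A : ℝ := ∑ l ∈ Finset.Icc (-(p : ℤ)) (p : ℤ), ‖α l‖ with hA
  set M : ℝ := h * Real.sqrt Δ * p * Cσ with hM
  have hCσ0 : 0 ≤ Cσ := le_trans (abs_nonneg _) (hσ 0)
  have hA0 : 0 ≤ A := Finset.sum_nonneg fun l _ => norm_nonneg _
  have hM0 : 0 ≤ M := by positivity
  have hsup : ∀ k : ℕ, (⨆ x : ℝ, ‖a k x‖ ^ 2) ≤ A ^ 2 * (M ^ 2) ^ k / (Nat.factorial k) := by
    intro k
    refine ciSup_le fun x => ?_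
    have h1 : ‖a k x‖ ≤ M ^ k * A / Real.sqrt (Nat.factorial k) := by
      refine (hbound k x).trans ?_
      have hsum : ∑ l ∈ Finset.Icc (-(p : ℤ)) (p : ℤ),
          ‖α l‖ * |(l : ℝ)| ^ k * |σ x| ^ k *
            Real.exp (-(h ^ 2 * (l : ℝ) ^ 2 * (σ x) ^ 2 * Δ) / 2)
          ≤ (p : ℝ) ^ k * Cσ ^ k * A := by
        have : ∀ l ∈ Finset.Icc (-(p : ℤ)) (p : ℤ),
            ‖α l‖ * |(l : ℝ)| ^ k * |σ x| ^ k *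
              Real.exp (-(h ^ 2 * (l : ℝ) ^ 2 * (σ x) ^ 2 * Δ) / 2)
            ≤ ‖α l‖ * ((p : ℝ) ^ k * Cσ ^ k) := by
          intro l hl
          have hlp : |(l : ℝ)| ≤ (p : ℝ) := by
            rw [Finset.mem_Icc] at hl
            exact_mod_cast _root_.abs_le.mpr ⟨hl.1, hl.2⟩
          have hexple : Real.exp (-(h ^ 2 * (l : ℝ) ^ 2 * (σ x) ^ 2 * Δ) / 2) ≤ 1 := by
            rw [Real.exp_le_one_iff]
            have : 0 ≤ h ^ 2 * (l : ℝ) ^ 2 * (σ x) ^ 2 * Δ := by positivity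
            linarith
          calc ‖α l‖ * |(l : ℝ)| ^ k * |σ x| ^ k *
                Real.exp (-(h ^ 2 * (l : ℝ) ^ 2 * (σ x) ^ 2 * Δ) / 2)
              ≤ ‖α l‖ * (p : ℝ) ^ k * Cσ ^ k * 1 := by
                gcongr ‖α l‖ * ?_ ^ k * ?_ ^ k * ?_
                all_goals first | exact hlp | exact hσ x | exact hexple
            _ = ‖α l‖ * ((p : ℝ) ^ k * Cσ ^ k) := by ring
        refine (Finset.sum_le_sum this).trans_eq ?_
        rw [← Finset.sum_mul, hA]
        ring
      calc (h ^ k * Real.sqrt Δ ^ k / Real.sqrt (Nat.factorial k)) *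
            ∑ l ∈ Finset.Icc (-(p : ℤ)) (p : ℤ),
              ‖α l‖ * |(l : ℝ)| ^ k * |σ x| ^ k *
                Real.exp (-(h ^ 2 * (l : ℝ) ^ 2 * (σ x) ^ 2 * Δ) / 2)
          ≤ (h ^ k * Real.sqrt Δ ^ k / Real.sqrt (Nat.factorial k)) *
              ((p : ℝ) ^ k * Cσ ^ k * A) := by
            exact mul_le_mul_of_nonneg_left hsum (by positivity)
        _ = M ^ k * A / Real.sqrt (Nat.factorial k) := by
            rw [hM, mul_pow, mul_pow, mul_pow]
            ring
    have h2 : ‖a k x‖ ^ 2 ≤ (M ^ k * A / Real.sqrt (Nat.factorial k)) ^ 2 :=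
      pow_le_pow_left₀ (norm_nonneg _) h1 2
    refine h2.trans_eq ?_
    rw [div_pow, mul_pow, Real.sq_sqrt (Nat.cast_nonneg _), pow_right_comm]
    ring
  have hnonneg : ∀ k : ℕ, 0 ≤ (k : ℝ) ^ β * ⨆ x : ℝ, ‖a k x‖ ^ 2 := fun k =>
    mul_nonneg (Real.rpow_nonneg (Nat.cast_nonneg _) _)
      (Real.iSup_nonneg fun x => sq_nonneg _)
  refine Summable.of_nonneg_of_le hnonneg (fun k => ?_)
    ((Real.summable_pow_div_factorial (Real.exp β * M ^ 2)).mul_left (A ^ 2))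
  rcases Nat.eq_zero_or_pos k with hk | hk
  · subst hk
    simp only [Nat.cast_zero, Real.zero_rpow hβ.ne', zero_mul]
    positivity
  · have hk1 : (1 : ℝ) ≤ (k : ℝ) := by exact_mod_cast hk
    have h1 : (k : ℝ) ^ β ≤ Real.exp β ^ k := by
      have hkpos : (0 : ℝ) < k := by linarith
      calc (k : ℝ) ^ β = Real.exp (β * Real.log k) := by
            rw [Real.rpow_def_of_pos hkpos, mul_comm]
        _ ≤ Real.exp (β * k) := by
            refine Real.exp_le_exp.mpr (mul_le_mul_of_nonneg_left ?_ hβ.le)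
            exact (Real.log_le_sub_one_of_pos hkpos).trans (by linarith)
        _ = Real.exp β ^ k := by
            rw [← Real.exp_nat_mul]
            ring_nf
    calc (k : ℝ) ^ β * ⨆ x : ℝ, ‖a k x‖ ^ 2
        ≤ Real.exp β ^ k * (A ^ 2 * (M ^ 2) ^ k / (Nat.factorial k)) := by
          exact mul_le_mul h1 (hsup k) (Real.iSup_nonneg fun x => sq_nonneg _)
            (by positivity)
      _ = A ^ 2 * ((Real.exp β * M ^ 2) ^ k / (Nat.factorial k)) := by
          rw [mul_pow]
          ring
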